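/- Soundness of the min-weight extraction: In the and-or explanation tree T with weight function W_T (atom vertex: min of children's weights; rule vertex: 1 plus sum of children's weights), the subtree obtained by starting at the root and recursively selecting, for each atom vertex, one child of minimum weight, and for each rule vertex, all children, is an explanation tree whose number of rule vertices equals W_T(root); hence it yields a shortest explanation. -/

import Mathlib

/-- A ground normal rule: head atom, positive body atoms, negative body atoms. -/
structure Rule (α : Type) where
  head : α
  pos : Finset α
  neg : Finset α

/-- Finite rose trees with vertex labels in `L`; a vertex of a tree is identified
with the subtree hanging from it. -/
inductive RTree (L : Type) : Type
  | node : L → List (RTree L) → RTree L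

namespace RTree

def label {L : Type} : RTree L → L
  | node l _ => l

def children {L : Type} : RTree L → List (RTree L)
  | node _ cs => cs

end RTree

/-- Rule `r` supports atom `p` using atoms in `X` but not in `Z`:
`H(r) = p`, `B⁺(r) ⊆ X \ Z` and `B⁻(r) ∩ X = ∅`. -/
def Supports {α : Type} (X Z : Set α) (r : Rule α) (p : α) : Prop :=
  r.head = p ∧ ↑r.pos ⊆ X \ Z ∧ ∀ a ∈ r.neg, a ∉ X

/-- `IsAOTNode P X Z t`: `t` is (a node of) the and-or explanation tree w.r.t.
program `P` and answer set `X`, where `Z` is the set of atoms labeling the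
ancestor atom vertices.  An atom vertex labeled `p` has one rule-vertex child for
each rule of `P` supporting `p` using atoms in `X` but not in `insert p Z` (and
only such children), and has at least one child (so that every leaf is a rule
vertex); a rule vertex labeled `r` has one atom-vertex child for each atom of
`B⁺(r)` (and only such children). -/
inductive IsAOTNode {α : Type} (P : Set (Rule α)) (X : Set α) :
    Set α → RTree (α ⊕ Rule α) → Prop
  | atom {Z : Set α} {p : α} {cs : List (RTree (α ⊕ Rule α))}
      (hp : p ∈ X) (hne : cs ≠ [])
      (hcomplete : ∀ r ∈ P, Supports X (insert p Z) r p →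
        ∃ c ∈ cs, RTree.label c = Sum.inr r)
      (hsound : ∀ c ∈ cs,
        ∃ r ∈ P, Supports X (insert p Z) r p ∧ RTree.label c = Sum.inr r)
      (hrec : ∀ c ∈ cs, IsAOTNode P X (insert p Z) c) :
      IsAOTNode P X Z (.node (.inl p) cs)
  | rule {Z : Set α} {r : Rule α} {cs : List (RTree (α ⊕ Rule α))}
      (hcomplete : ∀ a ∈ r.pos, ∃ c ∈ cs, RTree.label c = Sum.inl a)
      (hsound : ∀ c ∈ cs, ∃ a ∈ r.pos, RTree.label c = Sum.inl a)
      (hrec : ∀ c ∈ cs, IsAOTNode P X Z c) :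
      IsAOTNode P X Z (.node (.inr r) cs)

/-- Minimum of a list of naturals (0 for the empty list; only used on nonempty
lists of children weights). -/
def listMin : List ℕ → ℕ
  | [] => 0
  | a :: l => l.foldr min a

/-- The weight function `W_T`: an atom (or-) vertex gets the minimum of its
children's weights, a rule (and-) vertex gets `1` plus the sum of its children's
weights (so leaves, being rule vertices, have weight 1). -/
def weightT {α ρ : Type} : RTree (α ⊕ ρ) → ℕ
  | .node (.inl _) cs => listMin (cs.attach.map (fun c => weightT c.1))
  | .node (.inr _) cs => 1 + (cs.attach.map (fun c => weightT c.1)).sum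
decreasing_by
  all_goals (have := List.sizeOf_lt_of_mem c.2; simp only [RTree.node.sizeOf_spec]; omega)

/-- The number of rule (and-) vertices of a tree. -/
def ruleCount {α ρ : Type} : RTree (α ⊕ ρ) → ℕ
  | .node (.inl _) cs => (cs.attach.map (fun c => ruleCount c.1)).sum
  | .node (.inr _) cs => 1 + (cs.attach.map (fun c => ruleCount c.1)).sum
decreasing_by
  all_goals (have := List.sizeOf_lt_of_mem c.2; simp only [RTree.node.sizeOf_spec]; omega)

/-- `SolOf S T`: `S` is an explanation tree (solution subtree) in the and-or tree
`T`: it has the same root label, each atom (or-) vertex of `S` keeps exactly one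
of the children it has in `T`, and each rule (and-) vertex keeps all of its
children. -/
inductive SolOf {α ρ : Type} : RTree (α ⊕ ρ) → RTree (α ⊕ ρ) → Prop
  | atom {a : α} {cs : List (RTree (α ⊕ ρ))} {c s : RTree (α ⊕ ρ)} :
      c ∈ cs → SolOf s c → SolOf (.node (.inl a) [s]) (.node (.inl a) cs)
  | rule {r : ρ} {cs ss : List (RTree (α ⊕ ρ))} :
      List.Forall₂ SolOf ss cs → SolOf (.node (.inr r) ss) (.node (.inr r) cs)

/-- `MinSolOf S T`: the explanation tree obtained by recursively selecting, at
each atom vertex, a child of minimum `weightT`-weight, and at each rule vertex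
all children. -/
inductive MinSolOf {α ρ : Type} : RTree (α ⊕ ρ) → RTree (α ⊕ ρ) → Prop
  | atom {a : α} {cs : List (RTree (α ⊕ ρ))} {c s : RTree (α ⊕ ρ)} :
      c ∈ cs → (∀ c' ∈ cs, weightT c ≤ weightT c') → MinSolOf s c →
      MinSolOf (.node (.inl a) [s]) (.node (.inl a) cs)
  | rule {r : ρ} {cs ss : List (RTree (α ⊕ ρ))} :
      List.Forall₂ MinSolOf ss cs → MinSolOf (.node (.inr r) ss) (.node (.inr r) cs)

section Aux
variable {α ρ : Type}

lemma foldr_min_mem (a : ℕ) (l : List ℕ) : l.foldr min a ∈ a :: l := by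
  induction l with
  | nil => simp
  | cons b t ih =>
    simp only [List.foldr_cons]
    rcases min_cases b (t.foldr min a) with ⟨h, _⟩ | ⟨h, _⟩
    · rw [h]; simp
    · rw [h]; rcases List.mem_cons.1 ih with h' | h' <;> simp_all

lemma foldr_min_le (a : ℕ) (l : List ℕ) :
    l.foldr min a ≤ a ∧ ∀ b ∈ l, l.foldr min a ≤ b := by
  induction l with
  | nil => simp
  | cons b t ih =>
    simp only [List.foldr_cons]
    refine ⟨le_trans (min_le_right _ _) ih.1, ?_⟩
    intro x hx
    rcases List.mem_cons.1 hx with rfl | hx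
    · exact min_le_left _ _
    · exact le_trans (min_le_right _ _) (ih.2 x hx)

lemma listMin_le {a : ℕ} {l : List ℕ} (h : a ∈ l) : listMin l ≤ a := by
  cases l with
  | nil => simp at h
  | cons b t =>
    rcases List.mem_cons.1 h with rfl | h
    · exact (foldr_min_le a t).1
    · exact (foldr_min_le b t).2 a h

lemma listMin_mem {l : List ℕ} (h : l ≠ []) : listMin l ∈ l := by
  cases l with
  | nil => simp at h
  | cons b t => exact foldr_min_mem b t

lemma listMin_eq {a : ℕ} {l : List ℕ} (h : a ∈ l) (hmin : ∀ b ∈ l, a ≤ b) :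
    listMin l = a :=
  le_antisymm (listMin_le h) (hmin _ (listMin_mem (by rintro rfl; simp at h)))

lemma weightT_inl (a : α) (cs : List (RTree (α ⊕ ρ))) :
    weightT (.node (.inl a) cs) = listMin (cs.map weightT) := by
  rw [weightT]
  congr 1
  simp [List.attach_map_val]

lemma weightT_inr (r : ρ) (cs : List (RTree (α ⊕ ρ))) :
    weightT (.node (.inr r) cs) = 1 + (cs.map weightT).sum := by
  rw [weightT]
  congr 1
  simp [List.attach_map_val]

lemma ruleCount_inl (a : α) (cs : List (RTree (α ⊕ ρ))) :
    ruleCount (.node (.inl a) cs) = (cs.map ruleCount).sum := by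
  rw [ruleCount]
  congr 1
  simp [List.attach_map_val]

lemma ruleCount_inr (r : ρ) (cs : List (RTree (α ⊕ ρ))) :
    ruleCount (.node (.inr r) cs) = 1 + (cs.map ruleCount).sum := by
  rw [ruleCount]
  congr 1
  simp [List.attach_map_val]

lemma exists_argmin {β : Type} (f : β → ℕ) :
    ∀ (l : List β), l ≠ [] → ∃ c ∈ l, ∀ c' ∈ l, f c ≤ f c'
  | [], h => absurd rfl h
  | [b], _ => ⟨b, by simp⟩
  | b :: b' :: t, _ => by
    obtain ⟨c, hc, hmin⟩ := exists_argmin f (b' :: t) (by simp)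
    by_cases h : f b ≤ f c
    · exact ⟨b, by simp, fun c' hc' => by
        rcases List.mem_cons.1 hc' with rfl | hc'
        · exact le_refl _
        · exact le_trans h (hmin _ hc')⟩
    · exact ⟨c, List.mem_cons_of_mem _ hc, fun c' hc' => by
        rcases List.mem_cons.1 hc' with rfl | hc'
        · exact (not_le.1 h).le
        · exact hmin _ hc'⟩

lemma exists_forall₂ {β γ : Type} {R : β → γ → Prop} :
    ∀ (cs : List γ), (∀ c ∈ cs, ∃ s, R s c) → ∃ ss, List.Forall₂ R ss cs
  | [], _ => ⟨[], List.Forall₂.nil⟩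
  | c :: cs, h => by
    obtain ⟨s, hs⟩ := h c (by simp)
    obtain ⟨ss, hss⟩ := exists_forall₂ cs (fun c hc => h c (by simp [hc]))
    exact ⟨s :: ss, List.Forall₂.cons hs hss⟩

lemma minSolOf_exists {P : Set (Rule α)} {X Z : Set α} {T : RTree (α ⊕ Rule α)}
    (hT : IsAOTNode P X Z T) : ∃ S, MinSolOf S T := by
  induction hT with
  | atom hp hne hcomplete hsound hrec ih =>
    rename_i Z p cs
    obtain ⟨c, hc, hmin⟩ := exists_argmin weightT cs hne
    obtain ⟨s, hs⟩ := ih c hc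
    exact ⟨_, MinSolOf.atom hc hmin hs⟩
  | rule hcomplete hsound hrec ih =>
    obtain ⟨ss, hss⟩ := exists_forall₂ _ ih
    exact ⟨_, MinSolOf.rule hss⟩

mutual
theorem minSolOf_solOf : ∀ {S T : RTree (α ⊕ ρ)}, MinSolOf S T → SolOf S T
  | _, _, MinSolOf.atom hc _ hs => SolOf.atom hc (minSolOf_solOf hs)
  | _, _, MinSolOf.rule h => SolOf.rule (minSolOf_solOf_list h)
  termination_by S _ _ => sizeOf S
  decreasing_by all_goals (simp <;> omega)

theorem minSolOf_solOf_list : ∀ {ss cs : List (RTree (α ⊕ ρ))},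
    List.Forall₂ MinSolOf ss cs → List.Forall₂ SolOf ss cs
  | _, _, List.Forall₂.nil => List.Forall₂.nil
  | _, _, List.Forall₂.cons h t =>
      List.Forall₂.cons (minSolOf_solOf h) (minSolOf_solOf_list t)
  termination_by ss _ _ => sizeOf ss
  decreasing_by all_goals (simp <;> omega)
end

lemma forall₂_sum_eq {f g : RTree (α ⊕ ρ) → ℕ} {ss cs : List (RTree (α ⊕ ρ))}
    (h : List.Forall₂ (fun s c => f s = g c) ss cs) :
    (ss.map f).sum = (cs.map g).sum := by
  induction h with
  | nil => rfl
  | cons h _ ih => simp only [List.map_cons, List.sum_cons, h, ih]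

lemma forall₂_sum_le {f g : RTree (α ⊕ ρ) → ℕ} {ss cs : List (RTree (α ⊕ ρ))}
    (h : List.Forall₂ (fun s c => g c ≤ f s) ss cs) :
    (cs.map g).sum ≤ (ss.map f).sum := by
  induction h with
  | nil => exact le_refl _
  | cons h _ ih =>
    simp only [List.map_cons, List.sum_cons]
    exact Nat.add_le_add h ih

mutual
theorem minSolOf_ruleCount : ∀ {S T : RTree (α ⊕ ρ)},
    MinSolOf S T → ruleCount S = weightT T
  | _, _, MinSolOf.atom (c := c) (cs := cs) (s := s) hc hmin hs => by
    rw [ruleCount_inl, weightT_inl]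
    simp only [List.map_cons, List.map_nil, List.sum_cons, List.sum_nil, Nat.add_zero]
    rw [minSolOf_ruleCount hs]
    exact (listMin_eq (List.mem_map_of_mem hc)
      (fun b hb => by obtain ⟨c', hc', rfl⟩ := List.mem_map.1 hb
                      exact hmin c' hc')).symm
  | _, _, MinSolOf.rule h => by
    rw [ruleCount_inr, weightT_inr]
    exact congrArg (1 + ·) (forall₂_sum_eq (minSolOf_ruleCount_list h))
  termination_by S _ _ => sizeOf S
  decreasing_by all_goals (simp <;> omega)

theorem minSolOf_ruleCount_list : ∀ {ss cs : List (RTree (α ⊕ ρ))},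
    List.Forall₂ MinSolOf ss cs →
    List.Forall₂ (fun s c => ruleCount s = weightT c) ss cs
  | _, _, List.Forall₂.nil => List.Forall₂.nil
  | _, _, List.Forall₂.cons h t =>
      List.Forall₂.cons (minSolOf_ruleCount h) (minSolOf_ruleCount_list t)
  termination_by ss _ _ => sizeOf ss
  decreasing_by all_goals (simp <;> omega)
end

mutual
theorem solOf_le : ∀ {S T : RTree (α ⊕ ρ)}, SolOf S T → weightT T ≤ ruleCount S
  | _, _, SolOf.atom (c := c) (cs := cs) (s := s) hc hs => by
    rw [ruleCount_inl, weightT_inl]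
    simp only [List.map_cons, List.map_nil, List.sum_cons, List.sum_nil, Nat.add_zero]
    exact le_trans (listMin_le (List.mem_map_of_mem hc)) (solOf_le hs)
  | _, _, SolOf.rule h => by
    rw [ruleCount_inr, weightT_inr]
    exact Nat.add_le_add_left (forall₂_sum_le (solOf_le_list h)) 1
  termination_by S _ _ => sizeOf S
  decreasing_by all_goals (simp <;> omega)

theorem solOf_le_list : ∀ {ss cs : List (RTree (α ⊕ ρ))},
    List.Forall₂ SolOf ss cs →
    List.Forall₂ (fun s c => weightT c ≤ ruleCount s) ss cs
  | _, _, List.Forall₂.nil => List.Forall₂.nil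
  | _, _, List.Forall₂.cons h t =>
      List.Forall₂.cons (solOf_le h) (solOf_le_list t)
  termination_by ss _ _ => sizeOf ss
  decreasing_by all_goals (simp <;> omega)
end

end Aux

/-- Soundness of min-weight extraction: a min-weight selection exists, any
min-weight selection is an explanation tree whose number of rule vertices equals
`W_T(root)`, and hence it is a shortest explanation. -/
theorem minWeight_extraction_sound {α : Type} (P : Set (Rule α)) (X : Set α) (p : α)
    (T : RTree (α ⊕ Rule α)) (hT : IsAOTNode P X ∅ T)
    (hroot : RTree.label T = Sum.inl p) :
    (∃ S, MinSolOf S T) ∧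
    ∀ S, MinSolOf S T →
      SolOf S T ∧ ruleCount S = weightT T ∧
      ∀ S', SolOf S' T → ruleCount S ≤ ruleCount S' := by
  refine ⟨minSolOf_exists hT, fun S hS => ⟨minSolOf_solOf hS, minSolOf_ruleCount hS, ?_⟩⟩
  intro S' hS'
  rw [minSolOf_ruleCount hS]
  exact solOf_le hS'
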